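/- A square matrix X of size 2^k × 2^k with nonnegative integer entries and all row and column sums equal to n is realizable by a balanced group-separable election compatible with the binary tree whose leaves in order correspond to the columns of X if and only if X is maximally-evenly-quartered. -/

import Mathlib

/-- See stmt_7: dyadic-block characterization of compatibility with the complete
binary tree whose leaves in order are the candidates. -/
def BalancedCompatible (k : ℕ) (σ : Equiv.Perm (Fin (2 ^ k))) : Prop :=
  ∀ j ≤ k, ∀ t : ℕ, t < 2 ^ (k - j) →
    ∃ s : ℕ, s < 2 ^ (k - j) ∧ ∀ p : Fin (2 ^ k),
      (t * 2 ^ j ≤ (p : ℕ) ∧ (p : ℕ) < (t + 1) * 2 ^ j) →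
      (s * 2 ^ j ≤ ((σ p : Fin (2 ^ k)) : ℕ) ∧ ((σ p : Fin (2 ^ k)) : ℕ) < (s + 1) * 2 ^ j)

/-- Index of a `2^k`-sized half inside `Fin (2^(k+1))`: `false` = first half
(upper rows / left columns), `true` = second half. -/
def qidx (k : ℕ) (a : Bool) (i : Fin (2 ^ k)) : Fin (2 ^ (k + 1)) :=
  ⟨(if a then 2 ^ k else 0) + (i : ℕ), by
    have h1 := i.isLt
    have h2 : (2 : ℕ) ^ (k + 1) = 2 ^ k * 2 := pow_succ 2 k
    split <;> omega⟩

/-- A `2^k × 2^k` matrix is maximally-evenly-quartered if it is `1 × 1`, or it is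
evenly-quartered and each of its four quarters is maximally-evenly-quartered. -/
def MaximallyEvenlyQuartered : (k : ℕ) → (Fin (2 ^ k) → Fin (2 ^ k) → ℕ) → Prop
  | 0, _ => True
  | k + 1, A =>
      ((∑ i, ∑ j, A (qidx k false i) (qidx k false j))
        = ∑ i, ∑ j, A (qidx k true i) (qidx k true j)) ∧
      ((∑ i, ∑ j, A (qidx k false i) (qidx k true j))
        = ∑ i, ∑ j, A (qidx k true i) (qidx k false j)) ∧
      (∀ a b : Bool,
        MaximallyEvenlyQuartered k (fun i j => A (qidx k a i) (qidx k b j)))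

-- ===== helpers =====

lemma qidx_val (k : ℕ) (a : Bool) (i : Fin (2^k)) :
    (qidx k a i : ℕ) = (if a then 2^k else 0) + (i : ℕ) := rfl

lemma qidx_eq_qidx_iff {k : ℕ} {a b : Bool} {i j : Fin (2^k)} :
    qidx k a i = qidx k b j ↔ a = b ∧ i = j := by
  constructor
  · intro h
    have hv : (qidx k a i : ℕ) = (qidx k b j : ℕ) := by rw [h]
    rw [qidx_val, qidx_val] at hv
    have hi := i.isLt; have hj := j.isLt
    cases a <;> cases b <;> simp_all <;> omega
  · rintro ⟨rfl, rfl⟩; rfl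

lemma qidx_surj {k : ℕ} (p : Fin (2 ^ (k+1))) : ∃ a i, p = qidx k a i := by
  have hp := p.isLt
  have h2 : (2:ℕ) ^ (k + 1) = 2 ^ k * 2 := pow_succ 2 k
  by_cases h : (p : ℕ) < 2 ^ k
  · exact ⟨false, ⟨p, h⟩, by apply Fin.ext; simp [qidx_val]⟩
  · exact ⟨true, ⟨(p : ℕ) - 2^k, by omega⟩, by apply Fin.ext; simp [qidx_val]; omega⟩

def halfE (k : ℕ) : Fin (2^k) ⊕ Fin (2^k) ≃ Fin (2^(k+1)) :=
  finSumFinEquiv.trans (finCongr (by rw [pow_succ]; ring))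

lemma halfE_inl (k : ℕ) (i : Fin (2^k)) : halfE k (Sum.inl i) = qidx k false i := by
  apply Fin.ext; simp [halfE, qidx_val]

lemma halfE_inr (k : ℕ) (i : Fin (2^k)) : halfE k (Sum.inr i) = qidx k true i := by
  apply Fin.ext; simp [halfE, qidx_val]; omega

lemma sum_split {k : ℕ} (f : Fin (2^(k+1)) → ℕ) :
    ∑ p, f p = ∑ i, f (qidx k false i) + ∑ i, f (qidx k true i) := by
  rw [← Equiv.sum_comp (halfE k) f, Fintype.sum_sum_type]
  simp [halfE_inl, halfE_inr]

lemma meq_zero (k : ℕ) : MaximallyEvenlyQuartered k (fun _ _ => 0) := by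
  induction k with
  | zero => trivial
  | succ k ih => exact ⟨by simp, by simp, fun a b => ih⟩

lemma meq_add {k : ℕ} {A B : Fin (2^k) → Fin (2^k) → ℕ}
    (hA : MaximallyEvenlyQuartered k A) (hB : MaximallyEvenlyQuartered k B) :
    MaximallyEvenlyQuartered k (fun i j => A i j + B i j) := by
  induction k with
  | zero => trivial
  | succ k ih =>
    obtain ⟨hA1, hA2, hA3⟩ := hA
    obtain ⟨hB1, hB2, hB3⟩ := hB
    refine ⟨?_, ?_, fun a b => ih (hA3 a b) (hB3 a b)⟩ <;>
      simp only [Finset.sum_add_distrib] <;> omega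

def combine (k : ℕ) (a : Bool) (σ₀ σ₁ : Equiv.Perm (Fin (2^k))) :
    Equiv.Perm (Fin (2^(k+1))) :=
  (Equiv.permCongr (halfE k))
    ((Equiv.sumCongr σ₀ σ₁).trans
      (if a then Equiv.sumComm _ _ else Equiv.refl _))

lemma combine_false_apply (k : ℕ) (a : Bool) (σ₀ σ₁ : Equiv.Perm (Fin (2^k)))
    (i : Fin (2^k)) : combine k a σ₀ σ₁ (qidx k false i) = qidx k a (σ₀ i) := by
  have hs : (halfE k).symm (qidx k false i) = Sum.inl i := by
    rw [← halfE_inl]; exact Equiv.symm_apply_apply _ _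
  cases a <;> simp [combine, Equiv.permCongr_apply, hs, halfE_inl, halfE_inr]

lemma combine_true_apply (k : ℕ) (a : Bool) (σ₀ σ₁ : Equiv.Perm (Fin (2^k)))
    (i : Fin (2^k)) : combine k a σ₀ σ₁ (qidx k true i) = qidx k (!a) (σ₁ i) := by
  have hs : (halfE k).symm (qidx k true i) = Sum.inr i := by
    rw [← halfE_inr]; exact Equiv.symm_apply_apply _ _
  cases a <;> simp [combine, Equiv.permCongr_apply, hs, halfE_inl, halfE_inr]

lemma pow_split {k j : ℕ} (hj : j ≤ k) : 2 ^ (k - j) * 2 ^ j = 2 ^ k := by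
  rw [← pow_add, Nat.sub_add_cancel hj]

lemma compat_combine {k : ℕ} (a : Bool) {σ₀ σ₁ : Equiv.Perm (Fin (2^k))}
    (h₀ : BalancedCompatible k σ₀) (h₁ : BalancedCompatible k σ₁) :
    BalancedCompatible (k+1) (combine k a σ₀ σ₁) := by
  intro j hj t ht
  rcases Nat.lt_or_ge k (j) with hk | hk
  · -- j = k+1
    have hjk : j = k + 1 := le_antisymm hj hk
    subst hjk
    simp only [Nat.sub_self, pow_zero] at ht ⊢
    refine ⟨0, by omega, fun p hp => ?_⟩
    have := p.isLt
    have h2 := ((combine k a σ₀ σ₁) p).isLt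
    omega
  · -- j ≤ k
    have hE : 2 ^ (k - j) * 2 ^ j = 2 ^ k := pow_split hk
    have hsub : k + 1 - j = (k - j) + 1 := by omega
    rw [hsub, pow_succ] at ht ⊢
    by_cases htl : t < 2 ^ (k - j)
    · obtain ⟨s₀, hs₀, hs₀p⟩ := h₀ j hk t htl
      refine ⟨(if a then 2 ^ (k-j) else 0) + s₀, by split <;> omega, fun p hp => ?_⟩
      have hplt : (p : ℕ) < 2 ^ k := by
        have : (t+1) * 2^j ≤ 2^(k-j) * 2^j := Nat.mul_le_mul_right _ (by omega)
        omega
      have hpq : p = qidx k false ⟨(p : ℕ), hplt⟩ := by apply Fin.ext; simp [qidx_val]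
      rw [hpq, combine_false_apply]
      have hb := hs₀p ⟨(p : ℕ), hplt⟩ (by simpa using hp)
      rw [qidx_val]
      have e1 : (if a then 2^(k-j) else 0) * 2^j = (if a then 2^k else 0) := by
        split <;> simp [hE]
      have e2 : ((if a then 2^(k-j) else 0) + s₀) * 2^j
          = (if a then 2^(k-j) else 0) * 2^j + s₀ * 2^j := by ring
      have e3 : ((if a then 2^(k-j) else 0) + s₀ + 1) * 2^j
          = (if a then 2^(k-j) else 0) * 2^j + (s₀ + 1) * 2^j := by ring
      rw [e2, e3, e1]
      split <;> omega
    · obtain ⟨t', rfl⟩ : ∃ t', t = t' + 2 ^ (k - j) := ⟨t - 2^(k-j), by omega⟩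
      have ht' : t' < 2 ^ (k - j) := by omega
      obtain ⟨s₁, hs₁, hs₁p⟩ := h₁ j hk t' ht'
      refine ⟨(if a then 0 else 2 ^ (k-j)) + s₁, by split <;> omega, fun p hp => ?_⟩
      have e4 : (t' + 2^(k-j)) * 2^j = t' * 2^j + 2^k := by rw [add_mul, hE]
      have e5 : (t' + 2^(k-j) + 1) * 2^j = (t'+1) * 2^j + 2^k := by rw [add_mul, add_mul, hE]; ring
      have hpge : 2^k ≤ (p : ℕ) := by
        have := Nat.mul_le_mul_right (2^j) (Nat.le_add_left (2^(k-j)) t')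
        omega
      have hplt : (p : ℕ) - 2^k < 2 ^ k := by
        have := p.isLt
        have h2 : (2:ℕ) ^ (k + 1) = 2 ^ k * 2 := pow_succ 2 k
        omega
      have hpq : p = qidx k true ⟨(p : ℕ) - 2^k, hplt⟩ := by
        apply Fin.ext; simp [qidx_val]; omega
      rw [hpq, combine_true_apply]
      have hb := hs₁p ⟨(p : ℕ) - 2^k, hplt⟩ (by simp; omega)
      rw [qidx_val]
      have e1 : (if a then 0 else 2^(k-j)) * 2^j = (if a then 0 else 2^k) := by
        split <;> simp [hE]
      have e2 : ((if a then 0 else 2^(k-j)) + s₁) * 2^j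
          = (if a then 0 else 2^(k-j)) * 2^j + s₁ * 2^j := by ring
      have e3 : ((if a then 0 else 2^(k-j)) + s₁ + 1) * 2^j
          = (if a then 0 else 2^(k-j)) * 2^j + (s₁ + 1) * 2^j := by ring
      have e6 : (if (!a) = true then (2:ℕ)^k else 0) = (if a = true then 0 else 2^k) := by
        cases a <;> rfl
      rw [e2, e3, e1, e6]
      split <;> omega

lemma two_pow_pos' (k : ℕ) : 0 < 2 ^ k := pow_pos (by norm_num) k

lemma compat_top {k : ℕ} {σ : Equiv.Perm (Fin (2^(k+1)))}
    (h : BalancedCompatible (k+1) σ) :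
    ∃ b : Bool, ∀ (a : Bool) (i : Fin (2^k)),
      ∃ j : Fin (2^k), σ (qidx k a i) = qidx k (xor a b) j := by
  have hks : 2 ^ (k + 1 - k) = 2 := by rw [Nat.add_sub_cancel_left, pow_one]
  obtain ⟨s₀, hs₀2, H0⟩ := h k (Nat.le_succ k) 0 (by omega)
  obtain ⟨s₁, hs₁2, H1⟩ := h k (Nat.le_succ k) 1 (by omega)
  rw [hks] at hs₀2 hs₁2
  -- membership helpers
  have mem0 : ∀ i : Fin (2^k), s₀ * 2^k ≤ (σ (qidx k false i) : ℕ) ∧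
      (σ (qidx k false i) : ℕ) < (s₀+1) * 2^k := by
    intro i; exact H0 _ (by constructor <;> simp [qidx_val] <;> exact i.isLt)
  have mem1 : ∀ i : Fin (2^k), s₁ * 2^k ≤ (σ (qidx k true i) : ℕ) ∧
      (σ (qidx k true i) : ℕ) < (s₁+1) * 2^k := by
    intro i
    refine H1 _ ⟨?_, ?_⟩ <;> simp [qidx_val] <;> have := i.isLt <;> omega
  have hne : s₀ ≠ s₁ := by
    intro he
    subst he
    -- all of σ's image lies in one block of size 2^k, contradiction with surjectivity
    have hall : ∀ p : Fin (2^(k+1)), s₀ * 2^k ≤ (σ p : ℕ) ∧ (σ p : ℕ) < (s₀+1) * 2^k := by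
      intro p
      obtain ⟨a, i, rfl⟩ := qidx_surj p
      cases a
      · exact mem0 i
      · exact mem1 i
    -- pick a point in the other half
    set y : Fin (2^(k+1)) := qidx k (decide (s₀ = 0)) ⟨0, two_pow_pos' k⟩ with hy
    have h1 := hall (σ.symm y)
    rw [Equiv.apply_symm_apply] at h1
    have hyv : (y : ℕ) = if s₀ = 0 then 2^k else 0 := by
      rw [hy, qidx_val]; rcases Nat.eq_zero_or_pos s₀ with h|h <;> simp_all
    have := two_pow_pos' k
    interval_cases s₀ <;> simp_all <;> omega
  refine ⟨decide (s₀ = 1), fun a i => ?_⟩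
  have hpos := two_pow_pos' k
  cases a
  · -- image in block s₀
    have hm := mem0 i
    have hlt : (σ (qidx k false i) : ℕ) - (if s₀ = 1 then 2^k else 0) < 2^k := by
      interval_cases s₀ <;> simp_all <;> omega
    refine ⟨⟨_, hlt⟩, Fin.ext ?_⟩
    rw [qidx_val]
    interval_cases s₀ <;> simp_all <;> omega
  · have hm := mem1 i
    have hs₁v : s₁ = 1 - s₀ := by omega
    have hlt : (σ (qidx k true i) : ℕ) - (if s₀ = 1 then 0 else 2^k) < 2^k := by
      interval_cases s₀ <;> simp_all <;> omega
    refine ⟨⟨_, hlt⟩, Fin.ext ?_⟩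
    rw [qidx_val]
    interval_cases s₀ <;> simp_all <;> omega

lemma compat_restrict {k : ℕ} {σ : Equiv.Perm (Fin (2^(k+1)))}
    (h : BalancedCompatible (k+1) σ) (a c : Bool) (τ : Equiv.Perm (Fin (2^k)))
    (hτ : ∀ i, σ (qidx k a i) = qidx k c (τ i)) :
    BalancedCompatible k τ := by
  intro j hj t ht
  have hE : 2 ^ (k - j) * 2 ^ j = 2 ^ k := pow_split hj
  have hsub : k + 1 - j = (k - j) + 1 := by omega
  have hjk : (2:ℕ)^j ≤ 2^k := Nat.pow_le_pow_right (by norm_num) hj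
  set A : ℕ := if a then 2^(k-j) else 0 with hA
  set C : ℕ := if c then 2^(k-j) else 0 with hC
  have hAk : A * 2^j = (if a then 2^k else 0) := by rw [hA]; split <;> simp [hE]
  have hCk : C * 2^j = (if c then 2^k else 0) := by rw [hC]; split <;> simp [hE]
  have hA2 : A ≤ 2^(k-j) := by rw [hA]; split <;> omega
  have hC2 : C ≤ 2^(k-j) := by rw [hC]; split <;> omega
  obtain ⟨S, hS, HS⟩ := h j (by omega) (A + t)
    (by rw [hsub, pow_succ]; omega)
  rw [hsub, pow_succ] at hS
  -- bound for points in the block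
  have hblk : ∀ i : Fin (2^k), t * 2^j ≤ (i:ℕ) ∧ (i:ℕ) < (t+1) * 2^j →
      S * 2^j ≤ (if c then 2^k else 0) + ((τ i : Fin (2^k)) : ℕ) ∧
      (if c then 2^k else 0) + ((τ i : Fin (2^k)) : ℕ) < (S+1) * 2^j := by
    intro i hi
    have := HS (qidx k a i) (by
      rw [qidx_val]
      have e1 : (A + t) * 2^j = A * 2^j + t * 2^j := by ring
      have e2 : (A + t + 1) * 2^j = A * 2^j + (t+1) * 2^j := by ring
      rw [e1, e2, hAk]
      split <;> omega)
    rwa [hτ, qidx_val] at this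
  -- determine the range of S using the first point of the block
  have hi₀lt : t * 2^j < 2^k := by
    have := (Nat.mul_lt_mul_right (two_pow_pos' j)).mpr ht
    omega
  have h0 := hblk ⟨t * 2^j, hi₀lt⟩ ⟨le_refl _, by
    show t * 2^j < (t+1) * 2^j
    have e : (t+1) * 2^j = t * 2^j + 2^j := by ring
    have := two_pow_pos' j
    omega⟩
  have hτlt := (τ ⟨t * 2^j, hi₀lt⟩).isLt
  have hup : (S+1) * 2^j = S * 2^j + 2^j := by ring
  have hSrange : C ≤ S ∧ S < C + 2^(k-j) := by
    cases c
    · simp only [Bool.false_eq_true, if_false] at h0 hC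
      refine ⟨by omega, ?_⟩
      rw [hC]
      have : S * 2^j < 2^(k-j) * 2^j := by rw [hE]; omega
      have := (Nat.mul_lt_mul_right (two_pow_pos' j)).mp this
      omega
    · simp only [if_true] at h0 hC
      rw [hC]
      refine ⟨?_, by omega⟩
      have h1 : 2^(k-j) * 2^j < (S+1) * 2^j := by rw [hE]; omega
      have := (Nat.mul_lt_mul_right (two_pow_pos' j)).mp h1
      omega
  obtain ⟨s, rfl⟩ : ∃ s, S = s + C := ⟨S - C, by omega⟩
  refine ⟨s, by omega, fun i hi => ?_⟩
  have hb := hblk i hi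
  have e1 : (s + C) * 2^j = s * 2^j + C * 2^j := by ring
  have e2 : (s + C + 1) * 2^j = (s+1) * 2^j + C * 2^j := by ring
  rw [e1, e2, hCk] at hb
  split at hb <;> omega

lemma meq_pm {k : ℕ} {σ : Equiv.Perm (Fin (2^k))} (h : BalancedCompatible k σ) :
    MaximallyEvenlyQuartered k (fun i j => if σ i = j then 1 else 0) := by
  induction k with
  | zero => trivial
  | succ k ih =>
    obtain ⟨b, hmap⟩ := compat_top h
    have hinj : ∀ a : Bool, Function.Injective (fun i => (hmap a i).choose) := by
      intro a i i' he
      have h1 := (hmap a i).choose_spec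
      have h2 := (hmap a i').choose_spec
      simp only at he
      rw [he, ← h2] at h1
      exact (qidx_eq_qidx_iff.mp (σ.injective h1)).2
    set τ : Bool → Equiv.Perm (Fin (2^k)) := fun a =>
      Equiv.ofBijective _ (Finite.injective_iff_bijective.mp (hinj a)) with hτ
    have spec : ∀ (a : Bool) i, σ (qidx k a i) = qidx k (xor a b) (τ a i) := by
      intro a i
      exact (hmap a i).choose_spec
    have hq : ∀ a c : Bool,
        (∑ i, ∑ j, (if σ (qidx k a i) = qidx k c j then (1:ℕ) else 0))
          = if xor a b = c then 2^k else 0 := by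
      intro a c
      have he : ∀ i j, (if σ (qidx k a i) = qidx k c j then (1:ℕ) else 0)
          = if (xor a b = c ∧ τ a i = j) then 1 else 0 := by
        intro i j
        simp [spec a i, qidx_eq_qidx_iff]
      simp_rw [he]
      by_cases hc : xor a b = c
      · simp [hc, Finset.sum_ite_eq, Finset.card_univ]
      · simp [hc]
    refine ⟨?_, ?_, ?_⟩
    · rw [hq, hq]; cases b <;> simp
    · rw [hq, hq]; cases b <;> simp
    · intro a c
      by_cases hac : xor a b = c
      · have he : (fun i j => if σ (qidx k a i) = qidx k c j then (1:ℕ) else 0)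
            = fun i j => if τ a i = j then 1 else 0 := by
          funext i j
          simp [spec a i, qidx_eq_qidx_iff, hac]
        show MaximallyEvenlyQuartered k (fun i j => if σ (qidx k a i) = qidx k c j then (1:ℕ) else 0)
        rw [he]
        exact ih (compat_restrict h a c (τ a) (fun i => by rw [spec a i, hac]))
      · have he : (fun i j => if σ (qidx k a i) = qidx k c j then (1:ℕ) else 0)
            = fun _ _ => 0 := by
          funext i j
          simp [spec a i, qidx_eq_qidx_iff, hac]
        show MaximallyEvenlyQuartered k (fun i j => if σ (qidx k a i) = qidx k c j then (1:ℕ) else 0)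
        rw [he]
        exact meq_zero k

lemma meq_votes {k : ℕ} (votes : Multiset (Equiv.Perm (Fin (2^k))))
    (hc : ∀ v ∈ votes, BalancedCompatible k v) :
    MaximallyEvenlyQuartered k
      (fun i j => (votes.filter (fun v => v i = j)).card) := by
  induction votes using Multiset.induction_on with
  | empty =>
    have he : (fun i j => ((0 : Multiset (Equiv.Perm (Fin (2^k)))).filter
        (fun v => v i = j)).card) = fun _ _ => 0 := by
      funext i j; simp
    rw [he]; exact meq_zero k
  | cons v s ih =>
    have he : (fun i j => ((v ::ₘ s).filter (fun v => v i = j)).card)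
        = fun i j => (if v i = j then 1 else 0) + (s.filter (fun w => w i = j)).card := by
      funext i j
      rw [Multiset.filter_cons, Multiset.card_add]
      congr 1
      split <;> simp
    rw [he]
    exact meq_add (meq_pm (hc v (Multiset.mem_cons_self v s)))
      (ih (fun w hw => hc w (Multiset.mem_cons_of_mem hw)))

lemma meq_transpose {k : ℕ} {A : Fin (2^k) → Fin (2^k) → ℕ}
    (h : MaximallyEvenlyQuartered k A) :
    MaximallyEvenlyQuartered k (fun i j => A j i) := by
  induction k with
  | zero => trivial
  | succ k ih =>
    obtain ⟨h1, h2, h3⟩ := h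
    refine ⟨?_, ?_, ?_⟩
    · rw [Finset.sum_comm]; rw [h1]; rw [Finset.sum_comm]
    · rw [Finset.sum_comm]; rw [← h2]; rw [Finset.sum_comm]
    · intro a c
      exact ih (h3 c a)

lemma const_row_total {k : ℕ} (f : Fin (2^k) → ℕ) (m : ℕ) (h : ∀ i, f i = m) :
    ∑ i, f i = 2^k * m := by
  rw [Finset.sum_congr rfl (fun i _ => h i), Finset.sum_const, Finset.card_univ,
    Fintype.card_fin, smul_eq_mul]

lemma meq_row_const {k : ℕ} {A : Fin (2^k) → Fin (2^k) → ℕ}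
    (h : MaximallyEvenlyQuartered k A) :
    ∀ i i', ∑ j, A i j = ∑ j, A i' j := by
  induction k with
  | zero =>
    intro i i'
    have h1 : (2:ℕ)^0 = 1 := rfl
    have hi := i.isLt; have hi' := i'.isLt
    have : i = i' := Fin.ext (by omega)
    rw [this]
  | succ k ih =>
    obtain ⟨h1, h2, h3⟩ := h
    have key : ∀ (a : Bool) (i₁ i₂ : Fin (2^k)),
        ∑ j, A (qidx k a i₁) j = ∑ j, A (qidx k a i₂) j := by
      intro a i₁ i₂
      rw [sum_split (fun j => A (qidx k a i₁) j), sum_split (fun j => A (qidx k a i₂) j),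
        ih (h3 a false) i₁ i₂, ih (h3 a true) i₁ i₂]
    have blocks : ∀ a : Bool, ∑ i, (∑ j, A (qidx k a i) j)
        = (∑ i, ∑ j, A (qidx k a i) (qidx k false j))
          + (∑ i, ∑ j, A (qidx k a i) (qidx k true j)) := by
      intro a
      rw [← Finset.sum_add_distrib]
      exact Finset.sum_congr rfl (fun i _ => sum_split _)
    have cross : ∀ i₁ i₂ : Fin (2^k),
        ∑ j, A (qidx k false i₁) j = ∑ j, A (qidx k true i₂) j := by
      intro i₁ i₂
      have e : 2^k * (∑ j, A (qidx k false i₁) j) = 2^k * (∑ j, A (qidx k true i₂) j) := by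
        rw [← const_row_total _ _ (fun i => key false i i₁),
          ← const_row_total _ _ (fun i => key true i i₂),
          blocks false, blocks true, h1, h2]
        omega
      exact Nat.eq_of_mul_eq_mul_left (two_pow_pos' k) e
    intro i i'
    obtain ⟨a, ia, rfl⟩ := qidx_surj i
    obtain ⟨a', ia', rfl⟩ := qidx_surj i'
    cases a <;> cases a'
    · exact key false ia ia'
    · exact cross ia ia'
    · exact (cross ia' ia).symm
    · exact key true ia ia'

lemma meq_col_const {k : ℕ} {A : Fin (2^k) → Fin (2^k) → ℕ}
    (h : MaximallyEvenlyQuartered k A) :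
    ∀ j j', ∑ i, A i j = ∑ i, A i j' :=
  meq_row_const (meq_transpose h)

lemma countP_zip_left {α β : Type*} (p : α → Bool) :
    ∀ (l₁ : List α) (l₂ : List β), l₁.length = l₂.length →
    (l₁.zip l₂).countP (fun pq => p pq.1) = l₁.countP p := by
  intro l₁
  induction l₁ with
  | nil => simp
  | cons a t ih =>
    intro l₂ hl
    cases l₂ with
    | nil => simp at hl
    | cons b t₂ =>
      simp only [List.zip_cons_cons, List.countP_cons, ih t₂ (by simpa using hl)]

lemma countP_zip_right {α β : Type*} (p : β → Bool) :
    ∀ (l₁ : List α) (l₂ : List β), l₁.length = l₂.length →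
    (l₁.zip l₂).countP (fun pq => p pq.2) = l₂.countP p := by
  intro l₁
  induction l₁ with
  | nil =>
    intro l₂ hl
    cases l₂ with
    | nil => simp
    | cons b t₂ => simp at hl
  | cons a t ih =>
    intro l₂ hl
    cases l₂ with
    | nil => simp at hl
    | cons b t₂ =>
      simp only [List.zip_cons_cons, List.countP_cons, ih t₂ (by simpa using hl)]

lemma countP_toList {α : Type*} (V : Multiset α) (p : α → Prop) [DecidablePred p] :
    V.toList.countP (fun a => decide (p a)) = (V.filter p).card := by
  conv_rhs => rw [← Multiset.coe_toList V]
  rw [Multiset.filter_coe, Multiset.coe_card, List.countP_eq_length_filter]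

lemma count_combine {k : ℕ} (e a c : Bool)
    (l : List (Equiv.Perm (Fin (2^k)) × Equiv.Perm (Fin (2^k))))
    (i' j' : Fin (2^k)) :
    (l.map (fun pq => combine k e pq.1 pq.2)).countP
        (fun v => decide (v (qidx k a i') = qidx k c j')) =
      if xor a e = c then
        l.countP (fun pq => decide ((if a then pq.2 else pq.1) i' = j'))
      else 0 := by
  rw [List.countP_map]
  cases a <;> cases c <;> cases e <;>
    simp [Function.comp, combine_false_apply, combine_true_apply, qidx_eq_qidx_iff]
      <;> (apply List.countP_congr; intro pq _;
           simp [Function.comp, combine_false_apply, combine_true_apply, qidx_eq_qidx_iff])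

lemma real_of_meq {k : ℕ} (n : ℕ) (X : Fin (2^k) → Fin (2^k) → ℕ)
    (hm : MaximallyEvenlyQuartered k X) (hr : ∀ i, ∑ j, X i j = n) :
    ∃ votes : Multiset (Equiv.Perm (Fin (2^k))),
      Multiset.card votes = n ∧ (∀ v ∈ votes, BalancedCompatible k v) ∧
      ∀ i j, (votes.filter (fun v => v i = j)).card = X i j := by
  induction k generalizing n with
  | zero =>
    have h1 : (2:ℕ)^0 = 1 := rfl
    refine ⟨Multiset.replicate n 1, by simp, ?_, ?_⟩
    · intro v _ j hj t ht
      have hj0 : j = 0 := Nat.le_zero.mp hj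
      subst hj0
      refine ⟨0, by omega, fun p _ => ?_⟩
      have := (v p).isLt
      omega
    · intro i j
      have hij : i = j := Fin.ext (by have := i.isLt; have := j.isLt; omega)
      subst hij
      haveI : Unique (Fin (2^0)) := ⟨⟨i⟩, fun a => Fin.ext (by have := a.isLt; have := i.isLt; omega)⟩
      have hXn : X i i = n := by
        rw [← hr i, Fintype.sum_unique (fun j => X i j)]
        exact congrArg (X i) (Subsingleton.elim _ _)
      rw [hXn]
      rw [Multiset.filter_eq_self.mpr, Multiset.card_replicate]
      intro v hv
      rw [Multiset.eq_of_mem_replicate hv]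
      rfl
  | succ k ih =>
    obtain ⟨h1, h2, h3⟩ := hm
    set i₀ : Fin (2^k) := ⟨0, two_pow_pos' k⟩ with hi₀
    set m := ∑ j, X (qidx k false i₀) (qidx k false j) with hm_def
    set m' := ∑ j, X (qidx k false i₀) (qidx k true j) with hm'_def
    have r00 : ∀ i, ∑ j, X (qidx k false i) (qidx k false j) = m :=
      fun i => meq_row_const (h3 false false) i i₀
    have r01 : ∀ i, ∑ j, X (qidx k false i) (qidx k true j) = m' :=
      fun i => meq_row_const (h3 false true) i i₀
    have r11 : ∀ i, ∑ j, X (qidx k true i) (qidx k true j) = m := by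
      intro i
      have hv : ∀ i', ∑ j, X (qidx k true i') (qidx k true j)
          = ∑ j, X (qidx k true i) (qidx k true j) :=
        fun i' => meq_row_const (h3 true true) i' i
      have e : 2^k * (∑ j, X (qidx k true i) (qidx k true j)) = 2^k * m := by
        rw [← const_row_total _ _ hv, ← const_row_total _ _ r00]
        exact h1.symm
      exact Nat.eq_of_mul_eq_mul_left (two_pow_pos' k) e
    have r10 : ∀ i, ∑ j, X (qidx k true i) (qidx k false j) = m' := by
      intro i
      have hv : ∀ i', ∑ j, X (qidx k true i') (qidx k false j)
          = ∑ j, X (qidx k true i) (qidx k false j) :=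
        fun i' => meq_row_const (h3 true false) i' i
      have e : 2^k * (∑ j, X (qidx k true i) (qidx k false j)) = 2^k * m' := by
        rw [← const_row_total _ _ hv, ← const_row_total _ _ r01]
        exact h2.symm
      exact Nat.eq_of_mul_eq_mul_left (two_pow_pos' k) e
    have hn : m + m' = n := by
      have hthis := hr (qidx k false i₀)
      rw [sum_split (fun j => X (qidx k false i₀) j)] at hthis
      rw [← hm_def, ← hm'_def] at hthis
      exact hthis
    obtain ⟨V00, card00, comp00, cnt00⟩ := ih m _ (h3 false false) r00
    obtain ⟨V11, card11, comp11, cnt11⟩ := ih m _ (h3 true true) r11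
    obtain ⟨V01, card01, comp01, cnt01⟩ := ih m' _ (h3 false true) r01
    obtain ⟨V10, card10, comp10, cnt10⟩ := ih m' _ (h3 true false) r10
    have len00 : V00.toList.length = m := by rw [Multiset.length_toList, card00]
    have len11 : V11.toList.length = m := by rw [Multiset.length_toList, card11]
    have len01 : V01.toList.length = m' := by rw [Multiset.length_toList, card01]
    have len10 : V10.toList.length = m' := by rw [Multiset.length_toList, card10]
    refine ⟨(↑((V00.toList.zip V11.toList).map (fun pq => combine k false pq.1 pq.2))
              : Multiset _)
          + (↑((V01.toList.zip V10.toList).map (fun pq => combine k true pq.1 pq.2))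
              : Multiset _), ?_, ?_, ?_⟩
    · rw [Multiset.card_add, Multiset.coe_card, Multiset.coe_card,
        List.length_map, List.length_map, List.length_zip, List.length_zip,
        len00, len11, len01, len10, min_self, min_self, hn]
    · intro v hv
      rw [Multiset.mem_add] at hv
      rcases hv with hv | hv <;> rw [Multiset.mem_coe, List.mem_map] at hv <;>
        obtain ⟨⟨p, q⟩, hpq, rfl⟩ := hv <;> obtain ⟨hp, hq⟩ := List.of_mem_zip hpq
      · exact compat_combine false (comp00 p (by rwa [← Multiset.mem_toList]))
          (comp11 q (by rwa [← Multiset.mem_toList]))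
      · exact compat_combine true (comp01 p (by rwa [← Multiset.mem_toList]))
          (comp10 q (by rwa [← Multiset.mem_toList]))
    · intro i j
      obtain ⟨a, i', rfl⟩ := qidx_surj i
      obtain ⟨c, j', rfl⟩ := qidx_surj j
      rw [Multiset.filter_add, Multiset.card_add,
        Multiset.filter_coe, Multiset.filter_coe, Multiset.coe_card, Multiset.coe_card,
        ← List.countP_eq_length_filter, ← List.countP_eq_length_filter,
        count_combine, count_combine]
      cases a <;> cases c <;> norm_num
      · rw [countP_zip_left (fun x => decide (x i' = j')) V00.toList V11.toList
          (by rw [len00, len11])]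
        rw [countP_toList V00 (fun v => v i' = j')]
        exact cnt00 i' j'
      · rw [countP_zip_left (fun x => decide (x i' = j')) V01.toList V10.toList
          (by rw [len01, len10])]
        rw [countP_toList V01 (fun v => v i' = j')]
        exact cnt01 i' j'
      · rw [countP_zip_right (fun x => decide (x i' = j')) V01.toList V10.toList
          (by rw [len01, len10])]
        rw [countP_toList V10 (fun v => v i' = j')]
        exact cnt10 i' j'
      · rw [countP_zip_right (fun x => decide (x i' = j')) V00.toList V11.toList
          (by rw [len00, len11])]
        rw [countP_toList V11 (fun v => v i' = j')]
        exact cnt11 i' j'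

/-- a `2^k × 2^k` nonnegative integer matrix with all row and column
sums equal to `n` is realizable by a balanced group-separable election compatible
with the complete binary tree whose leaves in order correspond to the columns iff it
is maximally-evenly-quartered. -/
theorem balanced_gs_realizable_iff_meq (k n : ℕ)
    (X : Fin (2 ^ k) → Fin (2 ^ k) → ℕ)
    (hrow : ∀ i : Fin (2 ^ k), ∑ j, X i j = n)
    (hcol : ∀ j : Fin (2 ^ k), ∑ i, X i j = n) :
    (∃ votes : Multiset (Equiv.Perm (Fin (2 ^ k))),
        Multiset.card votes = n ∧
        (∀ v ∈ votes, BalancedCompatible k v) ∧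
        ∀ i j, (votes.filter (fun v => v i = j)).card = X i j)
      ↔ MaximallyEvenlyQuartered k X := by
  constructor
  · rintro ⟨votes, -, hcomp, hcnt⟩
    have hX : X = fun i j => (votes.filter (fun v => v i = j)).card :=
      funext fun i => funext fun j => (hcnt i j).symm
    rw [hX]
    exact meq_votes votes hcomp
  · intro hm
    exact real_of_meq n X hm hrow
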